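/- Let $\mathfrak{O}$ be the ring of integers of a finite extension of $\mathbb{Q}_p$ with odd residue characteristic $p$, maximal ideal $\mathfrak{M}$, and residue field of size $q > 3$. Let $L$ be the subgroup of $\mathrm{SL}_2(\mathfrak{O})$ generated by $-\mathrm{id}$ together with all matrices $\begin{pmatrix} a & b \\ c & d \end{pmatrix} \in \mathrm{SL}_2(\mathfrak{O})$ with $a, d \in 1+\mathfrak{M}$, $b \in \mathfrak{M}^2$, $c \in \mathfrak{O}$. Then the closure of the commutator subgroup of $L$ equals $\left\{\begin{pmatrix} a & b \\ c & d\end{pmatrix} \in \mathrm{SL}_2(\mathfrak{O}) : a, d \in 1+\mathfrak{M}^2,\ b \in \mathfrak{M}^3,\ c \in \mathfrak{M}\right\}$. -/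

import Mathlib

open IsLocalRing

/-- `SL₂(𝒪)` carries the subspace topology from the (product) topology on matrices. -/
instance SL2.topologicalSpace (𝒪 : Type*) [CommRing 𝒪] [TopologicalSpace 𝒪] :
    TopologicalSpace (Matrix.SpecialLinearGroup (Fin 2) 𝒪) :=
  inferInstanceAs (TopologicalSpace {A : Matrix (Fin 2) (Fin 2) 𝒪 // A.det = 1})

namespace Stmt15Aux
variable {𝒪 : Type*} [CommRing 𝒪]
open scoped commutatorElement

local notation "SL" => Matrix.SpecialLinearGroup (Fin 2) 𝒪

lemma det_rel (g : SL) : g 0 0 * g 1 1 - g 0 1 * g 1 0 = 1 := by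
  have := g.2
  rwa [Matrix.det_fin_two] at this

lemma entry_mul (g h : SL) (i j : Fin 2) :
    (g * h) i j = g i 0 * h 0 j + g i 1 * h 1 j := by
  show ((g * h : SL) : Matrix (Fin 2) (Fin 2) 𝒪) i j = _
  rw [Matrix.SpecialLinearGroup.coe_mul, Matrix.mul_apply, Fin.sum_univ_two]

lemma inv_00 (g : SL) : g⁻¹ 0 0 = g 1 1 := by
  show ((g⁻¹ : SL) : Matrix (Fin 2) (Fin 2) 𝒪) 0 0 = _
  rw [Matrix.SpecialLinearGroup.coe_inv, Matrix.adjugate_fin_two]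
  simp

lemma inv_01 (g : SL) : g⁻¹ 0 1 = -(g 0 1) := by
  show ((g⁻¹ : SL) : Matrix (Fin 2) (Fin 2) 𝒪) 0 1 = _
  rw [Matrix.SpecialLinearGroup.coe_inv, Matrix.adjugate_fin_two]
  simp

lemma inv_10 (g : SL) : g⁻¹ 1 0 = -(g 1 0) := by
  show ((g⁻¹ : SL) : Matrix (Fin 2) (Fin 2) 𝒪) 1 0 = _
  rw [Matrix.SpecialLinearGroup.coe_inv, Matrix.adjugate_fin_two]
  simp

lemma inv_11 (g : SL) : g⁻¹ 1 1 = g 0 0 := by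
  show ((g⁻¹ : SL) : Matrix (Fin 2) (Fin 2) 𝒪) 1 1 = _
  rw [Matrix.SpecialLinearGroup.coe_inv, Matrix.adjugate_fin_two]
  simp


lemma mem_pow3 {I : Ideal 𝒪} {x y : 𝒪} (hx : x ∈ I ^ 2) (hy : y ∈ I) :
    x * y ∈ I ^ 3 := by
  have := Ideal.mul_mem_mul hx hy
  rwa [← pow_succ] at this

lemma mem_pow2 {I : Ideal 𝒪} {x y : 𝒪} (hx : x ∈ I) (hy : y ∈ I) :
    x * y ∈ I ^ 2 := by
  have := Ideal.mul_mem_mul hx hy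
  rwa [← pow_two] at this

lemma comm_entries (g h : SL) :
    (⁅g, h⁆ 0 0 - 1 =
        (h 1 0 * g 0 1 + h 1 1 * g 1 1) * (g 0 1 * h 1 0 - h 0 1 * g 1 0)
        - (h 1 0 * g 0 0 + h 1 1 * g 1 0) *
            (h 0 1 * (g 0 0 - g 1 1) + g 0 1 * (h 1 1 - h 0 0))) ∧
    (⁅g, h⁆ 0 1 =
        (h 0 0 * g 0 0 + h 0 1 * g 1 0) *
            (h 0 1 * (g 0 0 - g 1 1) + g 0 1 * (h 1 1 - h 0 0))
        - (h 0 0 * g 0 1 + h 0 1 * g 1 1) * (g 0 1 * h 1 0 - h 0 1 * g 1 0)) ∧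
    (⁅g, h⁆ 1 0 =
        (h 1 0 * g 0 1 + h 1 1 * g 1 1) *
            (g 1 0 * (h 0 0 - h 1 1) + h 1 0 * (g 1 1 - g 0 0))
        - (h 1 0 * g 0 0 + h 1 1 * g 1 0) * (g 1 0 * h 0 1 - h 1 0 * g 0 1)) ∧
    (⁅g, h⁆ 1 1 - 1 =
        (h 0 0 * g 0 0 + h 0 1 * g 1 0) * (g 1 0 * h 0 1 - h 1 0 * g 0 1)
        - (h 0 0 * g 0 1 + h 0 1 * g 1 1) *
            (g 1 0 * (h 0 0 - h 1 1) + h 1 0 * (g 1 1 - g 0 0))) := by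
  have hc : ⁅g, h⁆ = (g * h) * (h * g)⁻¹ := by group
  have hdg := det_rel g
  have hdh := det_rel h
  refine ⟨?_, ?_, ?_, ?_⟩ <;>
      rw [hc] <;> simp only [entry_mul, inv_00, inv_01, inv_10, inv_11]
  · linear_combination (h 0 0 * h 1 1 - h 0 1 * h 1 0) * hdg + hdh
  · ring
  · ring
  · linear_combination (h 0 0 * h 1 1 - h 0 1 * h 1 0) * hdg + hdh

lemma comm_mem {I : Ideal 𝒪} {g h : SL}
    (hg1 : g 0 1 ∈ I ^ 2) (hg2 : g 0 0 - g 1 1 ∈ I)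
    (hh1 : h 0 1 ∈ I ^ 2) (hh2 : h 0 0 - h 1 1 ∈ I) :
    ⁅g, h⁆ 0 0 - 1 ∈ I ^ 2 ∧ ⁅g, h⁆ 1 1 - 1 ∈ I ^ 2 ∧
      ⁅g, h⁆ 0 1 ∈ I ^ 3 ∧ ⁅g, h⁆ 1 0 ∈ I := by
  obtain ⟨e00, e01, e10, e11⟩ := comm_entries g h
  have hg2' : g 1 1 - g 0 0 ∈ I := by
    rw [← neg_sub]; exact I.neg_mem hg2
  have hh2' : h 1 1 - h 0 0 ∈ I := by
    rw [← neg_sub]; exact I.neg_mem hh2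
  have dU00 : g 0 1 * h 1 0 - h 0 1 * g 1 0 ∈ I ^ 2 :=
    sub_mem (Ideal.mul_mem_right _ _ hg1) (Ideal.mul_mem_right _ _ hh1)
  have dU01 : h 0 1 * (g 0 0 - g 1 1) + g 0 1 * (h 1 1 - h 0 0) ∈ I ^ 3 :=
    add_mem (mem_pow3 hh1 hg2) (mem_pow3 hg1 hh2')
  have dU10 : g 1 0 * (h 0 0 - h 1 1) + h 1 0 * (g 1 1 - g 0 0) ∈ I :=
    add_mem (Ideal.mul_mem_left _ _ hh2) (Ideal.mul_mem_left _ _ hg2')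
  have dU11 : g 1 0 * h 0 1 - h 1 0 * g 0 1 ∈ I ^ 2 :=
    sub_mem (Ideal.mul_mem_left _ _ hh1) (Ideal.mul_mem_left _ _ hg1)
  have hI32 : (I ^ 3 : Ideal 𝒪) ≤ I ^ 2 := Ideal.pow_le_pow_right (by norm_num)
  have hI21 : (I ^ 2 : Ideal 𝒪) ≤ I := Ideal.pow_le_self two_ne_zero
  have hW01 : h 0 0 * g 0 1 + h 0 1 * g 1 1 ∈ I ^ 2 :=
    add_mem (Ideal.mul_mem_left _ _ hg1) (Ideal.mul_mem_right _ _ hh1)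
  refine ⟨?_, ?_, ?_, ?_⟩
  · rw [e00]
    exact sub_mem (Ideal.mul_mem_left _ _ dU00)
      (Ideal.mul_mem_left _ _ (hI32 dU01))
  · rw [e11]
    exact sub_mem (Ideal.mul_mem_left _ _ dU11)
      (Ideal.mul_mem_right _ _ hW01)
  · rw [e01]
    exact sub_mem (Ideal.mul_mem_left _ _ dU01) (mem_pow3 hW01 (hI21 dU00))
  · rw [e10]
    exact sub_mem (Ideal.mul_mem_left _ _ dU10)
      (Ideal.mul_mem_left _ _ (hI21 dU11))

/-- lower elementary matrix -/
def E21 (c : 𝒪) : SL := ⟨!![1, 0; c, 1], by simp [Matrix.det_fin_two_of]⟩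

/-- upper elementary matrix -/
def E12 (b : 𝒪) : SL := ⟨!![1, b; 0, 1], by simp [Matrix.det_fin_two_of]⟩

/-- diagonal matrix -/
def Dg (x x' : 𝒪) (h : x * x' = 1) : SL :=
  ⟨!![x, 0; 0, x'], by simp [Matrix.det_fin_two_of, h]⟩

lemma E21_mul (c c' : 𝒪) : E21 c * E21 c' = E21 (c + c') := by
  apply Subtype.ext
  show (_ * _ : Matrix (Fin 2) (Fin 2) 𝒪) = _
  simp [E21, Matrix.mul_fin_two]

lemma E12_mul (b b' : 𝒪) : E12 b * E12 b' = E12 (b + b') := by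
  apply Subtype.ext
  show (_ * _ : Matrix (Fin 2) (Fin 2) 𝒪) = _
  simp [E12, Matrix.mul_fin_two, add_comm]

lemma E21_zero : E21 (0 : 𝒪) = 1 := by
  apply Subtype.ext
  show _ = (1 : Matrix (Fin 2) (Fin 2) 𝒪)
  simp [E21, Matrix.one_fin_two]

lemma E12_zero : E12 (0 : 𝒪) = 1 := by
  apply Subtype.ext
  show _ = (1 : Matrix (Fin 2) (Fin 2) 𝒪)
  simp [E12, Matrix.one_fin_two]

lemma E21_inv (c : 𝒪) : (E21 c)⁻¹ = E21 (-c) := by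
  apply inv_eq_of_mul_eq_one_right
  rw [E21_mul, add_neg_cancel, E21_zero]

lemma E12_inv (b : 𝒪) : (E12 b)⁻¹ = E12 (-b) := by
  apply inv_eq_of_mul_eq_one_right
  rw [E12_mul, add_neg_cancel, E12_zero]

lemma Dg_inv (x x' : 𝒪) (h : x * x' = 1) (h' : x' * x = 1) :
    (Dg x x' h)⁻¹ = Dg x' x h' := by
  apply inv_eq_of_mul_eq_one_right
  apply Subtype.ext
  show (_ * _ : Matrix (Fin 2) (Fin 2) 𝒪) = (1 : Matrix (Fin 2) (Fin 2) 𝒪)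
  simp [Dg, Matrix.mul_fin_two, Matrix.one_fin_two, h, h']

lemma comm_Dg_E21 (x x' c : 𝒪) (h : x * x' = 1) :
    ⁅Dg x x' h, E21 c⁆ = E21 ((x' * x' - 1) * c) := by
  have h' : x' * x = 1 := by rw [mul_comm]; exact h
  rw [commutatorElement_def, Dg_inv x x' h h', E21_inv]
  apply Subtype.ext
  show (_ * _ * _ * _ : Matrix (Fin 2) (Fin 2) 𝒪) = _
  simp only [Dg, E21, Matrix.mul_fin_two]
  ext i j
  fin_cases i <;> fin_cases j <;> simp
  · linear_combination h
  · linear_combination (-c) * h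
  · linear_combination h

lemma comm_Dg_E12 (x x' b : 𝒪) (h : x * x' = 1) :
    ⁅Dg x x' h, E12 b⁆ = E12 ((x * x - 1) * b) := by
  have h' : x' * x = 1 := by rw [mul_comm]; exact h
  rw [commutatorElement_def, Dg_inv x x' h h', E12_inv]
  apply Subtype.ext
  show (_ * _ * _ * _ : Matrix (Fin 2) (Fin 2) 𝒪) = _
  simp only [Dg, E12, Matrix.mul_fin_two]
  ext i j
  fin_cases i <;> fin_cases j <;> simp
  · linear_combination h
  · linear_combination (-b) * h
  · linear_combination h

lemma diag_decomp (a a' : 𝒪) (h : a * a' = 1) :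
    Dg a a' h =
      ⁅E21 (1 : 𝒪), E12 (-(a - 1))⁆ * E12 (-(a' * (a - 1) ^ 2)) * E21 (-(a * (a - 1))) := by
  rw [commutatorElement_def, E21_inv, E12_inv, neg_neg]
  apply Subtype.ext
  show _ = (_ * _ * _ * _ * _ * _ : Matrix (Fin 2) (Fin 2) 𝒪)
  simp only [Dg, E21, E12, Matrix.mul_fin_two]
  ext i j
  fin_cases i <;> fin_cases j <;> simp
  · linear_combination (exp := 1) (-(a * (a-1)^3)) * h
  · linear_combination (exp := 1) ((a-1)^2) * h
  · linear_combination (exp := 1) (-(a-1)^4) * h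
  · linear_combination (exp := 1) (a^2 - 3*a + 3) * h
end Stmt15Aux

/-- let `𝒪` be the ring of integers of a finite extension of `ℚ_p` (a discrete
valuation ring with its `𝔐`-adic topology), with odd residue characteristic `p` and residue
field of cardinality `q > 3`.  Let `L ≤ SL₂(𝒪)` be the subgroup generated by `-id` together
with all matrices `(a, b; c, d)` with `a, d ∈ 1+𝔐`, `b ∈ 𝔐²`, `c ∈ 𝒪`.  Then the closure of
the commutator subgroup `[L, L]` equals
`{(a, b; c, d) ∈ SL₂(𝒪) : a, d ∈ 1+𝔐², b ∈ 𝔐³, c ∈ 𝔐}`. -/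
theorem stmt15 (𝒪 : Type*) [CommRing 𝒪] [IsDomain 𝒪] [IsDiscreteValuationRing 𝒪]
    [TopologicalSpace 𝒪] [IsTopologicalRing 𝒪] (hadic : IsAdic (maximalIdeal 𝒪))
    (p : ℕ) (hp : p.Prime) (hodd : p ≠ 2) (hchar : CharP (ResidueField 𝒪) p)
    (hq : 3 < Nat.card (ResidueField 𝒪)) :
    closure
      ((⁅(Subgroup.closure
          {g : Matrix.SpecialLinearGroup (Fin 2) 𝒪 |
            (g : Matrix (Fin 2) (Fin 2) 𝒪) = -1 ∨
            (g 0 0 - 1 ∈ maximalIdeal 𝒪 ∧ g 1 1 - 1 ∈ maximalIdeal 𝒪 ∧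
              g 0 1 ∈ maximalIdeal 𝒪 ^ 2)}),
        (Subgroup.closure
          {g : Matrix.SpecialLinearGroup (Fin 2) 𝒪 |
            (g : Matrix (Fin 2) (Fin 2) 𝒪) = -1 ∨
            (g 0 0 - 1 ∈ maximalIdeal 𝒪 ∧ g 1 1 - 1 ∈ maximalIdeal 𝒪 ∧
              g 0 1 ∈ maximalIdeal 𝒪 ^ 2)})⁆ :
        Subgroup (Matrix.SpecialLinearGroup (Fin 2) 𝒪)) :
          Set (Matrix.SpecialLinearGroup (Fin 2) 𝒪)) =
      {g : Matrix.SpecialLinearGroup (Fin 2) 𝒪 |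
        g 0 0 - 1 ∈ maximalIdeal 𝒪 ^ 2 ∧ g 1 1 - 1 ∈ maximalIdeal 𝒪 ^ 2 ∧
          g 0 1 ∈ maximalIdeal 𝒪 ^ 3 ∧ g 1 0 ∈ maximalIdeal 𝒪} := by
  classical
  open Stmt15Aux commutatorElement in
  set 𝔪 : Ideal 𝒪 := maximalIdeal 𝒪 with h𝔪
  set S : Set (Matrix.SpecialLinearGroup (Fin 2) 𝒪) :=
    {g : Matrix.SpecialLinearGroup (Fin 2) 𝒪 |
      (g : Matrix (Fin 2) (Fin 2) 𝒪) = -1 ∨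
      (g 0 0 - 1 ∈ 𝔪 ∧ g 1 1 - 1 ∈ 𝔪 ∧ g 0 1 ∈ 𝔪 ^ 2)} with hS
  set L : Subgroup (Matrix.SpecialLinearGroup (Fin 2) 𝒪) := Subgroup.closure S with hL
  have hI21 : (𝔪 ^ 2 : Ideal 𝒪) ≤ 𝔪 := Ideal.pow_le_self two_ne_zero
  have hI32 : (𝔪 ^ 3 : Ideal 𝒪) ≤ 𝔪 ^ 2 := Ideal.pow_le_pow_right (by norm_num)
  -- the subgroup `M` bounding `L`
  set M : Subgroup (Matrix.SpecialLinearGroup (Fin 2) 𝒪) :=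
    { carrier := {g | g 0 1 ∈ 𝔪 ^ 2 ∧ g 0 0 - g 1 1 ∈ 𝔪}
      one_mem' := by
        constructor <;>
          simp [show ((1 : Matrix.SpecialLinearGroup (Fin 2) 𝒪) : Matrix (Fin 2) (Fin 2) 𝒪)
            = 1 from rfl, Matrix.one_apply]
      mul_mem' := by
        rintro x y ⟨hx1, hx2⟩ ⟨hy1, hy2⟩
        constructor
        · rw [entry_mul]
          exact add_mem (Ideal.mul_mem_left _ _ hy1) (Ideal.mul_mem_right _ _ hx1)
        · have e : (x * y) 0 0 - (x * y) 1 1 =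
              y 0 0 * (x 0 0 - x 1 1) + x 1 1 * (y 0 0 - y 1 1)
                + x 0 1 * y 1 0 - x 1 0 * y 0 1 := by
            rw [entry_mul, entry_mul]; ring
          rw [e]
          exact sub_mem (add_mem (add_mem (Ideal.mul_mem_left _ _ hx2)
            (Ideal.mul_mem_left _ _ hy2)) (Ideal.mul_mem_right _ _ (hI21 hx1)))
            (Ideal.mul_mem_left _ _ (hI21 hy1))
      inv_mem' := by
        rintro x ⟨hx1, hx2⟩
        constructor
        · rw [inv_01]; exact neg_mem hx1
        · rw [inv_00, inv_11, ← neg_sub]; exact neg_mem hx2 } with hM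
  have hLM : L ≤ M := by
    rw [hL, Subgroup.closure_le]
    rintro g (hg | ⟨hg1, hg2, hg3⟩)
    · constructor
      · show g 0 1 ∈ 𝔪 ^ 2
        have : g 0 1 = ((g : Matrix (Fin 2) (Fin 2) 𝒪)) 0 1 := rfl
        rw [this, hg]
        simp [Matrix.one_apply]
      · show g 0 0 - g 1 1 ∈ 𝔪
        have e0 : g 0 0 = ((g : Matrix (Fin 2) (Fin 2) 𝒪)) 0 0 := rfl
        have e1 : g 1 1 = ((g : Matrix (Fin 2) (Fin 2) 𝒪)) 1 1 := rfl
        rw [e0, e1, hg]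
        simp
    · refine ⟨hg3, ?_⟩
      have e : g 0 0 - g 1 1 = (g 0 0 - 1) - (g 1 1 - 1) := by ring
      rw [e]; exact sub_mem hg1 hg2
  -- the target subgroup `H`
  set H : Subgroup (Matrix.SpecialLinearGroup (Fin 2) 𝒪) :=
    { carrier := {g | g 0 0 - 1 ∈ 𝔪 ^ 2 ∧ g 1 1 - 1 ∈ 𝔪 ^ 2 ∧
        g 0 1 ∈ 𝔪 ^ 3 ∧ g 1 0 ∈ 𝔪}
      one_mem' := by
        refine ⟨?_, ?_, ?_, ?_⟩ <;>
          simp [show ((1 : Matrix.SpecialLinearGroup (Fin 2) 𝒪) : Matrix (Fin 2) (Fin 2) 𝒪)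
            = 1 from rfl, Matrix.one_apply]
      mul_mem' := by
        rintro x y ⟨hx0, hx3, hx1, hx2⟩ ⟨hy0, hy3, hy1, hy2⟩
        refine ⟨?_, ?_, ?_, ?_⟩
        · have e : (x * y) 0 0 - 1 = (x 0 0 - 1) * (y 0 0 - 1) + (x 0 0 - 1)
              + (y 0 0 - 1) + x 0 1 * y 1 0 := by rw [entry_mul]; ring
          rw [e]
          exact add_mem (add_mem (add_mem (Ideal.mul_mem_right _ _ hx0) hx0) hy0)
            (Ideal.mul_mem_right _ _ (hI32 hx1))
        · have e : (x * y) 1 1 - 1 = (x 1 1 - 1) * (y 1 1 - 1) + (x 1 1 - 1)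
              + (y 1 1 - 1) + x 1 0 * y 0 1 := by rw [entry_mul]; ring
          rw [e]
          exact add_mem (add_mem (add_mem (Ideal.mul_mem_right _ _ hx3) hx3) hy3)
            (Ideal.mul_mem_left _ _ (hI32 hy1))
        · rw [entry_mul]
          exact add_mem (Ideal.mul_mem_left _ _ hy1) (Ideal.mul_mem_right _ _ hx1)
        · rw [entry_mul]
          exact add_mem (Ideal.mul_mem_right _ _ hx2) (Ideal.mul_mem_left _ _ hy2)
      inv_mem' := by
        rintro x ⟨hx0, hx3, hx1, hx2⟩
        refine ⟨?_, ?_, ?_, ?_⟩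
        · rw [inv_00]; exact hx3
        · rw [inv_11]; exact hx0
        · rw [inv_01]; exact neg_mem hx1
        · rw [inv_10]; exact neg_mem hx2 } with hH
  -- `[L, L] ≤ H`
  have hcommH : ⁅L, L⁆ ≤ H := by
    rw [Subgroup.commutator_le]
    intro g hg h hh
    obtain ⟨hg1, hg2⟩ := hLM hg
    obtain ⟨hh1, hh2⟩ := hLM hh
    obtain ⟨c00, c11, c01, c10⟩ := comm_mem hg1 hg2 hh1 hh2
    exact ⟨c00, c11, c01, c10⟩
  -- closedness of `H` as a set
  have hmclosed : ∀ n : ℕ, IsClosed ((𝔪 ^ n : Ideal 𝒪) : Set 𝒪) := by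
    intro n
    have hopen := (isAdic_iff.mp hadic).1 n
    exact AddSubgroup.isClosed_of_isOpen (Submodule.toAddSubgroup (𝔪 ^ n)) hopen
  have hcont : ∀ i j : Fin 2,
      Continuous fun g : Matrix.SpecialLinearGroup (Fin 2) 𝒪 => g i j := by
    intro i j
    have h1 : Continuous fun g : Matrix.SpecialLinearGroup (Fin 2) 𝒪 =>
        (g : Matrix (Fin 2) (Fin 2) 𝒪) :=
      continuous_induced_dom
    exact h1.matrix_elem i j
  have hHclosed : IsClosed {g : Matrix.SpecialLinearGroup (Fin 2) 𝒪 |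
      g 0 0 - 1 ∈ 𝔪 ^ 2 ∧ g 1 1 - 1 ∈ 𝔪 ^ 2 ∧ g 0 1 ∈ 𝔪 ^ 3 ∧ g 1 0 ∈ 𝔪} := by
    have e : {g : Matrix.SpecialLinearGroup (Fin 2) 𝒪 |
        g 0 0 - 1 ∈ 𝔪 ^ 2 ∧ g 1 1 - 1 ∈ 𝔪 ^ 2 ∧ g 0 1 ∈ 𝔪 ^ 3 ∧ g 1 0 ∈ 𝔪} =
        ((fun g : Matrix.SpecialLinearGroup (Fin 2) 𝒪 => g 0 0 - 1) ⁻¹'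
          ((𝔪 ^ 2 : Ideal 𝒪) : Set 𝒪)) ∩
        ((fun g : Matrix.SpecialLinearGroup (Fin 2) 𝒪 => g 1 1 - 1) ⁻¹'
          ((𝔪 ^ 2 : Ideal 𝒪) : Set 𝒪)) ∩
        ((fun g : Matrix.SpecialLinearGroup (Fin 2) 𝒪 => g 0 1) ⁻¹'
          ((𝔪 ^ 3 : Ideal 𝒪) : Set 𝒪)) ∩
        ((fun g : Matrix.SpecialLinearGroup (Fin 2) 𝒪 => g 1 0) ⁻¹'
          ((𝔪 ^ 1 : Ideal 𝒪) : Set 𝒪)) := by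
      ext g
      simp only [Set.mem_setOf_eq, Set.mem_inter_iff, Set.mem_preimage, SetLike.mem_coe,
        pow_one]
      tauto
    rw [e]
    refine (((IsClosed.preimage ((hcont 0 0).sub continuous_const) (hmclosed 2)).inter
      (IsClosed.preimage ((hcont 1 1).sub continuous_const) (hmclosed 2))).inter
      (IsClosed.preimage (hcont 0 1) (hmclosed 3))).inter
      (IsClosed.preimage (hcont 1 0) (hmclosed 1))
  -- backward inclusion: the ideal-theoretic generation
  obtain ⟨π, hπ⟩ := IsDiscreteValuationRing.exists_irreducible 𝒪
  have hπm : π ∈ 𝔪 := by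
    rw [h𝔪, IsLocalRing.mem_maximalIdeal, mem_nonunits_iff]
    exact hπ.not_isUnit
  have hmne : (1 : 𝒪) ∉ 𝔪 := by
    intro h1
    exact (Ideal.IsMaximal.ne_top (IsLocalRing.maximalIdeal.isMaximal 𝒪))
      (Ideal.eq_top_of_isUnit_mem _ h1 isUnit_one)
  have hxu : IsUnit (1 + π : 𝒪) := by
    by_contra hc
    have : (1 + π : 𝒪) ∈ 𝔪 := by
      rw [h𝔪, IsLocalRing.mem_maximalIdeal, mem_nonunits_iff]; exact hc
    have : (1 : 𝒪) ∈ 𝔪 := by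
      have := sub_mem this hπm
      simpa using this
    exact hmne this
  obtain ⟨x', hx⟩ := hxu.exists_right_inv
  -- `2 + π` is a unit
  have h2 : (2 : 𝒪) ∉ 𝔪 := by
    intro h2m
    have hres : IsLocalRing.residue 𝒪 (2 : 𝒪) = 0 := by
      rw [h𝔪] at h2m
      exact (Ideal.Quotient.eq_zero_iff_mem).mpr h2m
    have : ((2 : ℕ) : ResidueField 𝒪) = 0 := by
      have e : ((2 : ℕ) : ResidueField 𝒪) = IsLocalRing.residue 𝒪 ((2 : ℕ) : 𝒪) :=
        (map_natCast _ 2).symm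
      rw [e, Nat.cast_ofNat]
      exact hres
    have hdvd : p ∣ 2 := (CharP.cast_eq_zero_iff (ResidueField 𝒪) p 2).mp this
    exact hodd ((Nat.prime_dvd_prime_iff_eq hp Nat.prime_two).mp hdvd)
  have h2π : IsUnit (2 + π : 𝒪) := by
    by_contra hc
    have hmem : (2 + π : 𝒪) ∈ 𝔪 := by
      rw [h𝔪, IsLocalRing.mem_maximalIdeal, mem_nonunits_iff]; exact hc
    have : (2 : 𝒪) ∈ 𝔪 := by
      have := sub_mem hmem hπm
      simpa using this
    exact h2 this
  -- `x * x - 1` and `x' * x' - 1` are uniformizers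
  have hu_eq : (1 + π) * (1 + π) - 1 = π * (2 + π) := by ring
  have hu_irr : Irreducible ((1 + π) * (1 + π) - 1 : 𝒪) := by
    rw [hu_eq]
    exact ((associated_mul_unit_left π _ h2π).symm).irreducible hπ
  have hu_span : 𝔪 = Ideal.span {(1 + π) * (1 + π) - 1} := by
    rw [h𝔪]
    exact (IsDiscreteValuationRing.irreducible_iff_uniformizer _).mp hu_irr
  have hxu' : IsUnit (x' : 𝒪) :=
    IsUnit.of_mul_eq_one (1 + π) (by rw [mul_comm]; exact hx)
  have hu'_eq : x' * x' - 1 = π * ((2 + π) * (-(x' * x'))) := by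
    linear_combination ((1 + π) * x' + 1) * hx
  have hu'_irr : Irreducible (x' * x' - 1 : 𝒪) := by
    rw [hu'_eq]
    exact (associated_mul_unit_left π _ (h2π.mul (hxu'.mul hxu').neg)).symm.irreducible hπ
  have hu'_span : 𝔪 = Ideal.span {x' * x' - 1} := by
    rw [h𝔪]
    exact (IsDiscreteValuationRing.irreducible_iff_uniformizer _).mp hu'_irr
  -- the diagonal generator is in `L`
  have hDgL : Dg (1 + π) x' hx ∈ L := by
    apply Subgroup.subset_closure
    right
    refine ⟨?_, ?_, ?_⟩
    · show (Dg (1 + π) x' hx) 0 0 - 1 ∈ 𝔪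
      have : (Dg (1 + π) x' hx) 0 0 = 1 + π := by simp [Dg]
      rw [this]
      simpa using hπm
    · show (Dg (1 + π) x' hx) 1 1 - 1 ∈ 𝔪
      have e : (Dg (1 + π) x' hx) 1 1 = x' := by simp [Dg]
      rw [e]
      have e2 : x' - 1 = π * (-x') := by linear_combination hx
      rw [e2]
      exact Ideal.mul_mem_right _ _ hπm
    · show (Dg (1 + π) x' hx) 0 1 ∈ 𝔪 ^ 2
      have : (Dg (1 + π) x' hx) 0 1 = 0 := by simp [Dg]
      rw [this]; exact zero_mem _
  have hE21L : ∀ c : 𝒪, E21 c ∈ L := by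
    intro c
    apply Subgroup.subset_closure
    right
    refine ⟨?_, ?_, ?_⟩
    · show (E21 c) 0 0 - 1 ∈ 𝔪
      have : (E21 c) 0 0 = 1 := by simp [E21]
      rw [this]; simpa using zero_mem 𝔪
    · show (E21 c) 1 1 - 1 ∈ 𝔪
      have : (E21 c) 1 1 = 1 := by simp [E21]
      rw [this]; simpa using zero_mem 𝔪
    · show (E21 c) 0 1 ∈ 𝔪 ^ 2
      have : (E21 c) 0 1 = 0 := by simp [E21]
      rw [this]; exact zero_mem _
  have hE12L : ∀ b : 𝒪, b ∈ 𝔪 ^ 2 → E12 b ∈ L := by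
    intro b hb
    apply Subgroup.subset_closure
    right
    refine ⟨?_, ?_, ?_⟩
    · show (E12 b) 0 0 - 1 ∈ 𝔪
      have : (E12 b) 0 0 = 1 := by simp [E12]
      rw [this]; simpa using zero_mem 𝔪
    · show (E12 b) 1 1 - 1 ∈ 𝔪
      have : (E12 b) 1 1 = 1 := by simp [E12]
      rw [this]; simpa using zero_mem 𝔪
    · show (E12 b) 0 1 ∈ 𝔪 ^ 2
      have : (E12 b) 0 1 = b := by simp [E12]
      rw [this]; exact hb
  -- lower unipotents with entry in `𝔪` are commutators
  have hE21C : ∀ m : 𝒪, m ∈ 𝔪 → E21 m ∈ ⁅L, L⁆ := by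
    intro m hm
    rw [hu'_span, Ideal.mem_span_singleton] at hm
    obtain ⟨c, hc⟩ := hm
    have : E21 m = ⁅Dg (1 + π) x' hx, E21 c⁆ := by
      rw [comm_Dg_E21, hc]
    rw [this]
    exact Subgroup.commutator_mem_commutator hDgL (hE21L c)
  -- upper unipotents with entry in `𝔪 ^ 3` are commutators
  have hE12C : ∀ m : 𝒪, m ∈ 𝔪 ^ 3 → E12 m ∈ ⁅L, L⁆ := by
    intro m hm
    have e3 : (𝔪 ^ 3 : Ideal 𝒪) = Ideal.span {(1 + π) * (1 + π) - 1} * 𝔪 ^ 2 := by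
      rw [← hu_span]
      exact pow_succ' 𝔪 2
    rw [e3, Ideal.mem_span_singleton_mul] at hm
    obtain ⟨z, hz, hzm⟩ := hm
    have : E12 m = ⁅Dg (1 + π) x' hx, E12 z⁆ := by
      rw [comm_Dg_E12, ← hzm, mul_comm]
    rw [this]
    exact Subgroup.commutator_mem_commutator hDgL (hE12L z hz)
  -- diagonal matrices `diag(a, a')` with `a - 1 ∈ 𝔪 ^ 2` are in `[L, L]`
  have hDgC : ∀ (a a' : 𝒪) (k : a * a' = 1), a - 1 ∈ 𝔪 ^ 2 → Dg a a' k ∈ ⁅L, L⁆ := by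
    intro a a' k hma
    rw [diag_decomp a a' k]
    have hm4 : (a - 1) ^ 2 ∈ 𝔪 ^ 4 := by
      have := Ideal.pow_mem_pow hma 2
      rwa [← pow_mul] at this
    have hm3 : (a - 1) ^ 2 ∈ 𝔪 ^ 3 := Ideal.pow_le_pow_right (by norm_num) hm4
    refine Subgroup.mul_mem _ (Subgroup.mul_mem _
      (Subgroup.commutator_mem_commutator (hE21L 1) (hE12L _ (neg_mem hma))) ?_) ?_
    · exact hE12C _ (neg_mem (Ideal.mul_mem_left _ _ hm3))
    · exact hE21C _ (neg_mem (Ideal.mul_mem_left _ _ (hI21 hma)))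
  -- final assembly
  apply subset_antisymm
  · exact closure_minimal (fun g hg => hcommH hg) hHclosed
  · intro g hg
    obtain ⟨hg0, hg3, hg1, hg2⟩ := hg
    have ha1 : g 0 0 - 1 ∈ 𝔪 := hI21 hg0
    have haU : IsUnit (g 0 0) := by
      by_contra hc
      have hmem : g 0 0 ∈ 𝔪 := by
        rw [h𝔪, IsLocalRing.mem_maximalIdeal, mem_nonunits_iff]; exact hc
      have : (1 : 𝒪) ∈ 𝔪 := by
        have := sub_mem hmem ha1
        simpa using this
      exact hmne this
    obtain ⟨a', k⟩ := haU.exists_right_inv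
    have hdet := det_rel g
    have hdec : g = E21 (g 1 0 * a') * Dg (g 0 0) a' k * E12 (a' * g 0 1) := by
      apply Subtype.ext
      show (g : Matrix (Fin 2) (Fin 2) 𝒪) = _
      rw [Matrix.SpecialLinearGroup.coe_mul, Matrix.SpecialLinearGroup.coe_mul]
      show _ = (!![1, 0; g 1 0 * a', 1] : Matrix (Fin 2) (Fin 2) 𝒪) *
        !![g 0 0, 0; 0, a'] * !![1, a' * g 0 1; 0, 1]
      rw [Matrix.mul_fin_two, Matrix.mul_fin_two]
      rw [Matrix.eta_fin_two ((g : Matrix (Fin 2) (Fin 2) 𝒪))]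
      ext i j
      fin_cases i <;> fin_cases j <;> simp
      · linear_combination (-(g 0 1)) * k
      · linear_combination (-(g 1 0)) * k
      · linear_combination (-(a' * g 0 1 * g 1 0) - g 1 1) * k + a' * hdet
    have hmem : g ∈ ⁅L, L⁆ := by
      rw [hdec]
      exact Subgroup.mul_mem _ (Subgroup.mul_mem _
        (hE21C _ (Ideal.mul_mem_right a' _ hg2)) (hDgC _ _ k hg0))
        (hE12C _ (Ideal.mul_mem_left _ a' hg1))
    exact subset_closure hmem
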